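/- arXiv:1806.06683 — 3 statements merged into one kernel-verified Lean document; each statement's English description precedes it below -/
import Mathlib

section
/- Let {R_n}_{n∈ℕ} be i.i.d. integer-valued random variables with bounded range (there is M ∈ ℕ with |R_n| ≤ M a.s.), nonpositive mean E(R_1) ≤ 0, and nonzero variance Var(R_1) > 0. Fix an integer x₀ and define X_0 = x₀ and X_{n+1} = X_n + R_{n+1} if X_n ≥ 1, and X_{n+1} = X_n otherwise. Let T := min{n : X_n ≤ 0} (min ∅ := ∞). Then P(T < ∞) = 1 and P(T ≥ k) ∈ O(1/√k), i.e., there exist C > 0 and K ∈ ℕ with P(T ≥ k) ≤ C/√k for all k ≥ K. -/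
open MeasureTheory ProbabilityTheory Finset

namespace BIWT

variable {Ω : Type*} {m0 : MeasurableSpace Ω}

/-- partial sum `S n = ∑_{i=1}^n Y i`. -/
def SS (Y : ℕ → Ω → ℝ) (n : ℕ) (ω : Ω) : ℝ := ∑ i ∈ Finset.Icc 1 n, Y i ω

/-- event: in corridor `(-a, b)` through time `n`. -/
def GG (Y : ℕ → Ω → ℝ) (a b : ℝ) (n : ℕ) : Set Ω :=
  {ω | ∀ j ≤ n, -a < SS Y j ω ∧ SS Y j ω < b}

/-- indicator of `GG`. -/
noncomputable def II (Y : ℕ → Ω → ℝ) (a b : ℝ) (n : ℕ) (ω : Ω) : ℝ :=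
  (GG Y a b n).indicator (fun _ => (1:ℝ)) ω

/-- stopped partial sums. -/
noncomputable def WW (Y : ℕ → Ω → ℝ) (a b : ℝ) (n : ℕ) (ω : Ω) : ℝ :=
  ∑ j ∈ Finset.range n, II Y a b j ω * Y (j+1) ω

variable {Y : ℕ → Ω → ℝ} {a b : ℝ}

lemma SS_zero (ω : Ω) : SS Y 0 ω = 0 := by simp [SS]

lemma reindex (n : ℕ) (ω : Ω) : ∑ j ∈ Finset.range n, Y (j+1) ω = SS Y n ω := by
  induction n with
  | zero => simp [SS]
  | succ n ih => rw [Finset.sum_range_succ, ih, SS, SS, Finset.sum_Icc_succ_top (by omega)]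

lemma meas_SS (hY : ∀ i, Measurable (Y i)) (n : ℕ) : Measurable (SS Y n) :=
  Finset.measurable_sum _ (fun i _ => hY i)

lemma GG_eq (n : ℕ) : GG Y a b n =
    ⋂ j, ⋂ (_ : j ≤ n), ({ω | -a < SS Y j ω} ∩ {ω | SS Y j ω < b}) := by
  ext ω; simp [GG, Set.mem_iInter, forall_and]

lemma meas_GG (hY : ∀ i, Measurable (Y i)) (n : ℕ) : MeasurableSet (GG Y a b n) := by
  rw [GG_eq]
  exact MeasurableSet.iInter fun j => MeasurableSet.iInter fun _ =>
    ((measurableSet_lt measurable_const (meas_SS hY j)).inter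
      (measurableSet_lt (meas_SS hY j) measurable_const))

lemma GG_antitone {m n : ℕ} (h : m ≤ n) : GG Y a b n ⊆ GG Y a b m :=
  fun ω hω j hj => hω j (hj.trans h)

lemma II_of_mem {n : ℕ} {ω : Ω} (h : ω ∈ GG Y a b n) : II Y a b n ω = 1 := by
  simp [II, Set.indicator_of_mem h]

lemma II_of_not_mem {n : ℕ} {ω : Ω} (h : ω ∉ GG Y a b n) : II Y a b n ω = 0 := by
  simp [II, Set.indicator_of_notMem h]

lemma meas_II (hY : ∀ i, Measurable (Y i)) (n : ℕ) : Measurable (II Y a b n) :=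
  (measurable_const.indicator (meas_GG hY n))

lemma meas_WW (hY : ∀ i, Measurable (Y i)) (n : ℕ) : Measurable (WW Y a b n) :=
  Finset.measurable_sum _ (fun j _ => (meas_II hY j).mul (hY (j+1)))

lemma WW_succ (n : ℕ) (ω : Ω) :
    WW Y a b (n+1) ω = WW Y a b n ω + II Y a b n ω * Y (n+1) ω := by
  simp [WW, Finset.sum_range_succ]

lemma WW_eq_SS_of_mem {n : ℕ} {ω : Ω} (h : ω ∈ GG Y a b n) : WW Y a b n ω = SS Y n ω := by
  rw [WW, ← reindex n ω]
  refine Finset.sum_congr rfl fun j hj => ?_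
  rw [II_of_mem (GG_antitone (by exact (Finset.mem_range.1 hj).le.trans (le_refl n)) h), one_mul]

end BIWT

namespace BIWT
variable {Ω : Type*} {m0 : MeasurableSpace Ω}
variable {Y : ℕ → Ω → ℝ} {a b M : ℝ}

lemma SS_bound {n : ℕ} {ω : Ω} (hM : ∀ i, |Y i ω| ≤ M) : |SS Y n ω| ≤ n * M := by
  calc |SS Y n ω| ≤ ∑ i ∈ Finset.Icc 1 n, |Y i ω| := Finset.abs_sum_le_sum_abs _ _
    _ ≤ ∑ _i ∈ Finset.Icc 1 n, M := Finset.sum_le_sum fun i _ => hM i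
    _ ≤ n * M := by
        rw [Finset.sum_const, Nat.card_Icc, nsmul_eq_mul]
        have hM0 : 0 ≤ M := le_trans (abs_nonneg _) (hM 0)
        have h1 : ((n + 1 - 1 : ℕ) : ℝ) ≤ (n : ℝ) := by
          exact_mod_cast Nat.le_of_eq (by omega)
        exact mul_le_mul_of_nonneg_right h1 hM0

lemma WW_bound (ha : 0 ≤ a) (hb : 0 ≤ b) {ω : Ω} (hM : ∀ i, |Y i ω| ≤ M) :
    ∀ n, -(a + M) ≤ WW Y a b n ω ∧ WW Y a b n ω ≤ b + M := by
  have hM0 : 0 ≤ M := le_trans (abs_nonneg _) (hM 0)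
  intro n
  induction n with
  | zero =>
      constructor <;> simp [WW] <;> nlinarith
  | succ n ih =>
      by_cases h : ω ∈ GG Y a b n
      · have hS := h n le_rfl
        have hYb := hM (n+1)
        rw [WW_succ, WW_eq_SS_of_mem h, II_of_mem h, one_mul]
        rw [abs_le] at hYb
        constructor <;> nlinarith [hS.1, hS.2]
      · rw [WW_succ, II_of_not_mem h, zero_mul, add_zero]
        exact ih

/-- coordinates extension -/
def EV (n : ℕ) (v : ((Finset.range (n+1) : Finset ℕ) → ℝ)) (i : ℕ) : ℝ :=
  if h : i ∈ Finset.range (n+1) then v ⟨i, h⟩ else 0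

lemma meas_EV (n i : ℕ) : Measurable (fun v => EV n v i) := by
  unfold EV
  split_ifs with h
  · exact measurable_pi_apply _
  · exact measurable_const

def Bset (a b : ℝ) (n : ℕ) : Set ((Finset.range (n+1) : Finset ℕ) → ℝ) :=
  {v | ∀ j ≤ n, -a < ∑ i ∈ Finset.Icc 1 j, EV n v i ∧ ∑ i ∈ Finset.Icc 1 j, EV n v i < b}

lemma meas_Bset (a b : ℝ) (n : ℕ) : MeasurableSet (Bset a b n) := by
  have : Bset a b n = ⋂ j, ⋂ (_ : j ≤ n),
      ({v | -a < ∑ i ∈ Finset.Icc 1 j, EV n v i} ∩ {v | ∑ i ∈ Finset.Icc 1 j, EV n v i < b}) := by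
    ext v; simp [Bset, Set.mem_iInter, forall_and]
  rw [this]
  have hs : ∀ j : ℕ, Measurable (fun v => ∑ i ∈ Finset.Icc 1 j, EV n v i) :=
    fun j => Finset.measurable_sum _ (fun i _ => meas_EV n i)
  exact MeasurableSet.iInter fun j => MeasurableSet.iInter fun _ =>
    ((measurableSet_lt measurable_const (hs j)).inter (measurableSet_lt (hs j) measurable_const))

lemma EV_apply (n : ℕ) (ω : Ω) {i : ℕ} (hi : i ∈ Finset.range (n+1)) :
    EV n (fun j : (Finset.range (n+1) : Finset ℕ) => Y j ω) i = Y i ω := by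
  simp [EV, hi]

lemma EV_sum (n : ℕ) (ω : Ω) {j : ℕ} (hj : j ≤ n) :
    ∑ i ∈ Finset.Icc 1 j, EV n (fun l : (Finset.range (n+1) : Finset ℕ) => Y l ω) i
      = SS Y j ω := by
  refine Finset.sum_congr rfl fun i hi => EV_apply n ω ?_
  rw [Finset.mem_Icc] at hi
  exact Finset.mem_range.2 (by omega)

lemma GG_preimage (a b : ℝ) (n : ℕ) (ω : Ω) :
    ((fun l : (Finset.range (n+1) : Finset ℕ) => Y l ω) ∈ Bset a b n) ↔ ω ∈ GG Y a b n := by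
  unfold Bset GG
  constructor <;> intro h j hj <;> have := h j hj <;>
    rw [EV_sum n ω hj] at * <;> exact this

end BIWT

namespace BIWT
variable {Ω : Type*} {m0 : MeasurableSpace Ω} {μ : Measure Ω}
variable {Y : ℕ → Ω → ℝ} {a b M : ℝ}

lemma indep_master (hY : ∀ i, Measurable (Y i))
    (hindep : iIndepFun Y μ) (n : ℕ)
    {φ : ((Finset.range (n+1) : Finset ℕ) → ℝ) → ℝ} {ψ : ℝ → ℝ}
    (hφ : Measurable φ) (hψ : Measurable ψ) :
    IndepFun (fun ω => φ (fun i : (Finset.range (n+1) : Finset ℕ) => Y i ω))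
      (fun ω => ψ (Y (n+1) ω)) μ := by
  have hd : Disjoint (Finset.range (n+1)) ({n+1} : Finset ℕ) := by
    simp [Finset.disjoint_singleton_right]
  have h := hindep.indepFun_finset (Finset.range (n+1)) {n+1} hd hY
  have h2 := h.comp hφ (hψ.comp (measurable_pi_apply
    (⟨n+1, Finset.mem_singleton_self _⟩ : ({n+1} : Finset ℕ))))
  exact h2

lemma II_comp (a b : ℝ) (n : ℕ) (ω : Ω) :
    Set.indicator (Bset a b n) (fun _ => (1:ℝ))
        (fun i : (Finset.range (n+1) : Finset ℕ) => Y i ω) = II Y a b n ω := by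
  by_cases h : ω ∈ GG Y a b n
  · rw [Set.indicator_of_mem ((GG_preimage a b n ω).2 h), II_of_mem h]
  · rw [Set.indicator_of_notMem (fun hc => h ((GG_preimage a b n ω).1 hc)), II_of_not_mem h]

lemma IISS_comp (a b : ℝ) (n : ℕ) (ω : Ω) :
    Set.indicator (Bset a b n) (fun v => ∑ i ∈ Finset.Icc 1 n, EV n v i)
        (fun i : (Finset.range (n+1) : Finset ℕ) => Y i ω)
      = II Y a b n ω * SS Y n ω := by
  by_cases h : ω ∈ GG Y a b n
  · rw [Set.indicator_of_mem ((GG_preimage a b n ω).2 h), II_of_mem h, one_mul,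
      EV_sum n ω le_rfl]
  · rw [Set.indicator_of_notMem (fun hc => h ((GG_preimage a b n ω).1 hc)), II_of_not_mem h,
      zero_mul]

/-- `∫ I_n · ψ(Y (n+1)) = (∫ I_n) · (∫ ψ(Y (n+1)))` -/
lemma int_II_mul [IsProbabilityMeasure μ] (hY : ∀ i, Measurable (Y i))
    (hindep : iIndepFun Y μ) (n : ℕ)
    {ψ : ℝ → ℝ} (hψ : Measurable ψ) :
    ∫ ω, II Y a b n ω * ψ (Y (n+1) ω) ∂μ
      = (μ (GG Y a b n)).toReal * ∫ ω, ψ (Y (n+1) ω) ∂μ := by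
  have hind := indep_master hY hindep n
    (φ := Set.indicator (Bset a b n) (fun _ => (1:ℝ))) (ψ := ψ)
    (measurable_const.indicator (meas_Bset a b n)) hψ
  have h1 : (fun ω => Set.indicator (Bset a b n) (fun _ => (1:ℝ))
      (fun i : (Finset.range (n+1) : Finset ℕ) => Y i ω)) = II Y a b n := by
    funext ω; exact II_comp a b n ω
  rw [h1] at hind
  have : ∫ ω, II Y a b n ω * ψ (Y (n+1) ω) ∂μ
      = (∫ ω, II Y a b n ω ∂μ) * ∫ ω, ψ (Y (n+1) ω) ∂μ :=
    hind.integral_mul_eq_mul_integral ((meas_II hY n).aestronglyMeasurable)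
    ((hψ.comp (hY (n+1))).aestronglyMeasurable)
  rw [this]
  congr 1
  rw [show II Y a b n = (GG Y a b n).indicator (fun _ => (1:ℝ)) from rfl]
  exact integral_indicator_one (meas_GG hY n)

lemma int_IISS_mul_Y [IsProbabilityMeasure μ] (hY : ∀ i, Measurable (Y i))
    (hindep : iIndepFun Y μ) (n : ℕ) :
    ∫ ω, (II Y a b n ω * SS Y n ω) * Y (n+1) ω ∂μ
      = (∫ ω, II Y a b n ω * SS Y n ω ∂μ) * ∫ ω, Y (n+1) ω ∂μ := by
  have hφ : Measurable (fun v => Set.indicator (Bset a b n)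
      (fun v => ∑ i ∈ Finset.Icc 1 n, EV n v i) v) :=
    (Finset.measurable_sum _ (fun i _ => meas_EV n i)).indicator (meas_Bset a b n)
  have hind := indep_master hY hindep n (ψ := id) hφ measurable_id
  have h1 : (fun ω => Set.indicator (Bset a b n) (fun v => ∑ i ∈ Finset.Icc 1 n, EV n v i)
      (fun i : (Finset.range (n+1) : Finset ℕ) => Y i ω))
        = fun ω => II Y a b n ω * SS Y n ω := by
    funext ω; exact IISS_comp a b n ω
  rw [h1] at hind
  exact hind.integral_mul_eq_mul_integral (((meas_II hY n).mul (meas_SS hY n)).aestronglyMeasurable)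
    ((hY (n+1)).aestronglyMeasurable)

end BIWT

namespace BIWT
variable {Ω : Type*} {m0 : MeasurableSpace Ω} {μ : Measure Ω}
variable {Y : ℕ → Ω → ℝ} {a b M : ℝ}

lemma integrable_of_bound [IsProbabilityMeasure μ] {g : Ω → ℝ} (hg : Measurable g) (C : ℝ)
    (h : ∀ᵐ ω ∂μ, |g ω| ≤ C) : Integrable g μ :=
  Integrable.mono' (integrable_const C) hg.aestronglyMeasurable
    (by simpa [Real.norm_eq_abs] using h)

lemma abs_II_le (n : ℕ) (ω : Ω) : |II Y a b n ω| ≤ 1 := by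
  unfold II Set.indicator
  split_ifs <;> simp

lemma integrable_II_mul_Y [IsProbabilityMeasure μ] (hY : ∀ i, Measurable (Y i))
    (hM : ∀ᵐ ω ∂μ, ∀ i, |Y i ω| ≤ M) (n : ℕ) :
    Integrable (fun ω => II Y a b n ω * Y (n+1) ω) μ := by
  refine integrable_of_bound ((meas_II hY n).mul (hY (n+1))) M ?_
  filter_upwards [hM] with ω hω
  have h1 : |II Y a b n ω| ≤ 1 := abs_II_le n ω
  have h2 : |Y (n+1) ω| ≤ M := hω (n+1)
  calc |II Y a b n ω * Y (n+1) ω| = |II Y a b n ω| * |Y (n+1) ω| := abs_mul _ _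
    _ ≤ 1 * M := mul_le_mul h1 h2 (abs_nonneg _) zero_le_one
    _ = M := one_mul M

lemma int_WW [IsProbabilityMeasure μ] (hY : ∀ i, Measurable (Y i))
    (hindep : iIndepFun Y μ)
    (hM : ∀ᵐ ω ∂μ, ∀ i, |Y i ω| ≤ M)
    (hmean : ∀ i, 1 ≤ i → ∫ ω, Y i ω ∂μ = 0) (n : ℕ) :
    ∫ ω, WW Y a b n ω ∂μ = 0 := by
  unfold WW
  rw [integral_finset_sum _ (fun j _ => integrable_II_mul_Y hY hM j)]
  refine Finset.sum_eq_zero fun j _ => ?_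
  have := int_II_mul (μ := μ) (a := a) (b := b) hY hindep j (ψ := id) measurable_id
  simp only [id] at this
  rw [this, hmean (j+1) (by omega), mul_zero]

lemma WW_abs_bound {n : ℕ} {ω : Ω} (hω : ∀ i, |Y i ω| ≤ M) : |WW Y a b n ω| ≤ n * M := by
  have h1 : |II Y a b n ω| ≤ 1 := abs_II_le n ω
  calc |WW Y a b n ω| ≤ ∑ j ∈ Finset.range n, |II Y a b j ω * Y (j+1) ω| :=
        Finset.abs_sum_le_sum_abs _ _
    _ ≤ ∑ _j ∈ Finset.range n, M := by
        refine Finset.sum_le_sum fun j _ => ?_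
        have h1 : |II Y a b j ω| ≤ 1 := abs_II_le j ω
        have h2 : |Y (j+1) ω| ≤ M := hω (j+1)
        calc |II Y a b j ω * Y (j+1) ω| = |II Y a b j ω| * |Y (j+1) ω| := abs_mul _ _
          _ ≤ 1 * M := mul_le_mul h1 h2 (abs_nonneg _) zero_le_one
          _ = M := one_mul M
    _ = n * M := by rw [Finset.sum_const, Finset.card_range, nsmul_eq_mul]

lemma integrable_WW [IsProbabilityMeasure μ] (hY : ∀ i, Measurable (Y i))
    (hM : ∀ᵐ ω ∂μ, ∀ i, |Y i ω| ≤ M) (n : ℕ) :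
    Integrable (WW Y a b n) μ := by
  refine integrable_of_bound (meas_WW hY n) (n * M) ?_
  filter_upwards [hM] with ω hω
  exact WW_abs_bound hω

end BIWT

namespace BIWT
variable {Ω : Type*} {m0 : MeasurableSpace Ω} {μ : Measure Ω}
variable {Y : ℕ → Ω → ℝ} {a b M σ2 : ℝ}

lemma integrable_f_WW [IsProbabilityMeasure μ] (hY : ∀ i, Measurable (Y i))
    (hM : ∀ᵐ ω ∂μ, ∀ i, |Y i ω| ≤ M) (n : ℕ) :
    Integrable (fun ω => (WW Y a b n ω + a) * (b - WW Y a b n ω)) μ := by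
  refine integrable_of_bound (((meas_WW hY n).add_const a).mul
    ((measurable_const.sub (meas_WW hY n)))) ((n*M + |a|) * (|b| + n*M)) ?_
  filter_upwards [hM] with ω hω
  have hw : |WW Y a b n ω| ≤ n * M := WW_abs_bound hω
  have h1 : |WW Y a b n ω + a| ≤ n*M + |a| := (abs_add_le _ _).trans (by linarith)
  have h2 : |b - WW Y a b n ω| ≤ |b| + n*M := by
    calc |b - WW Y a b n ω| ≤ |b| + |WW Y a b n ω| := by
          rw [sub_eq_add_neg]; exact (abs_add_le b _).trans (by rw [abs_neg])
      _ ≤ |b| + n*M := by linarith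
  calc |(WW Y a b n ω + a) * (b - WW Y a b n ω)|
      = |WW Y a b n ω + a| * |b - WW Y a b n ω| := abs_mul _ _
    _ ≤ (n*M + |a|) * (|b| + n*M) :=
        mul_le_mul h1 h2 (abs_nonneg _) (le_trans (abs_nonneg _) h1)

lemma integrable_II_mul_Ysq [IsProbabilityMeasure μ] (hY : ∀ i, Measurable (Y i))
    (hM : ∀ᵐ ω ∂μ, ∀ i, |Y i ω| ≤ M) (n : ℕ) :
    Integrable (fun ω => II Y a b n ω * (Y (n+1) ω)^2) μ := by
  refine integrable_of_bound ((meas_II hY n).mul ((hY (n+1)).pow_const 2)) (M^2) ?_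
  filter_upwards [hM] with ω hω
  have h1 : |II Y a b n ω| ≤ 1 := abs_II_le n ω
  have h2 : |Y (n+1) ω| ≤ M := hω (n+1)
  have h3 : |(Y (n+1) ω)^2| ≤ M^2 := by
    rw [abs_pow]
    exact pow_le_pow_left₀ (abs_nonneg _) h2 2
  calc |II Y a b n ω * (Y (n+1) ω)^2| = |II Y a b n ω| * |(Y (n+1) ω)^2| := abs_mul _ _
    _ ≤ 1 * M^2 := mul_le_mul h1 h3 (abs_nonneg _) zero_le_one
    _ = M^2 := one_mul _

lemma integrable_IISS_mul_Y [IsProbabilityMeasure μ] (hY : ∀ i, Measurable (Y i))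
    (hM : ∀ᵐ ω ∂μ, ∀ i, |Y i ω| ≤ M) (n : ℕ) :
    Integrable (fun ω => (II Y a b n ω * SS Y n ω) * Y (n+1) ω) μ := by
  refine integrable_of_bound (((meas_II hY n).mul (meas_SS hY n)).mul (hY (n+1)))
    ((1 * (n*M)) * M) ?_
  filter_upwards [hM] with ω hω
  have h1 : |II Y a b n ω| ≤ 1 := abs_II_le n ω
  have h2 : |SS Y n ω| ≤ n*M := SS_bound hω
  have h3 : |Y (n+1) ω| ≤ M := hω (n+1)
  have hM0 : 0 ≤ M := le_trans (abs_nonneg _) (hω 0)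
  calc |(II Y a b n ω * SS Y n ω) * Y (n+1) ω|
      = |II Y a b n ω| * |SS Y n ω| * |Y (n+1) ω| := by rw [abs_mul, abs_mul]
    _ ≤ (1 * (n*M)) * M := by
        apply mul_le_mul _ h3 (abs_nonneg _) (by positivity)
        exact mul_le_mul h1 h2 (abs_nonneg _) zero_le_one

lemma int_f_WW [IsProbabilityMeasure μ] (hY : ∀ i, Measurable (Y i))
    (hindep : iIndepFun Y μ)
    (hM : ∀ᵐ ω ∂μ, ∀ i, |Y i ω| ≤ M)
    (hmean : ∀ i, 1 ≤ i → ∫ ω, Y i ω ∂μ = 0)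
    (hsq : ∀ i, 1 ≤ i → ∫ ω, (Y i ω)^2 ∂μ = σ2) (n : ℕ) :
    ∫ ω, (WW Y a b n ω + a) * (b - WW Y a b n ω) ∂μ
      = a*b - σ2 * ∑ j ∈ Finset.range n, (μ (GG Y a b j)).toReal := by
  induction n with
  | zero =>
      simp [WW]
  | succ n ih =>
      have hpt : ∀ ω, (WW Y a b (n+1) ω + a) * (b - WW Y a b (n+1) ω)
          = (WW Y a b n ω + a) * (b - WW Y a b n ω)
            - (II Y a b n ω * (Y (n+1) ω)^2)
            + (b-a) * (II Y a b n ω * Y (n+1) ω)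
            - 2 * ((II Y a b n ω * SS Y n ω) * Y (n+1) ω) := by
        intro ω
        by_cases h : ω ∈ GG Y a b n
        · rw [WW_succ, WW_eq_SS_of_mem h, II_of_mem h]; ring
        · rw [WW_succ, II_of_not_mem h]; ring
      have hfun : (fun ω => (WW Y a b (n+1) ω + a) * (b - WW Y a b (n+1) ω))
          = fun ω => (WW Y a b n ω + a) * (b - WW Y a b n ω)
            - (II Y a b n ω * (Y (n+1) ω)^2)
            + (b-a) * (II Y a b n ω * Y (n+1) ω)
            - 2 * ((II Y a b n ω * SS Y n ω) * Y (n+1) ω) := funext hpt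
      have iA := integrable_f_WW (μ := μ) (a := a) (b := b) hY hM n
      have iB := integrable_II_mul_Ysq (μ := μ) (a := a) (b := b) hY hM n
      have iC := (integrable_II_mul_Y (μ := μ) (a := a) (b := b) hY hM n).const_mul (b-a)
      have iD := (integrable_IISS_mul_Y (μ := μ) (a := a) (b := b) hY hM n).const_mul 2
      have iAB : Integrable (fun ω => (WW Y a b n ω + a) * (b - WW Y a b n ω)
          - II Y a b n ω * (Y (n+1) ω)^2) μ := iA.sub iB
      have iABC : Integrable (fun ω => (WW Y a b n ω + a) * (b - WW Y a b n ω)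
          - II Y a b n ω * (Y (n+1) ω)^2
          + (b-a) * (II Y a b n ω * Y (n+1) ω)) μ := iAB.add iC
      rw [hfun, integral_sub iABC iD, integral_add iAB iC, integral_sub iA iB, ih]
      have hB : ∫ ω, II Y a b n ω * (Y (n+1) ω)^2 ∂μ
          = (μ (GG Y a b n)).toReal * σ2 := by
        have := int_II_mul (μ := μ) (a := a) (b := b) hY hindep n
          (ψ := fun y => y^2) (measurable_id.pow_const 2)
        rw [this, hsq (n+1) (by omega)]
      have hC : ∫ ω, (b-a) * (II Y a b n ω * Y (n+1) ω) ∂μ = 0 := by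
        rw [integral_const_mul]
        have := int_II_mul (μ := μ) (a := a) (b := b) hY hindep n (ψ := id) measurable_id
        simp only [id] at this
        rw [this, hmean (n+1) (by omega), mul_zero, mul_zero]
      have hD : ∫ ω, 2 * ((II Y a b n ω * SS Y n ω) * Y (n+1) ω) ∂μ = 0 := by
        rw [integral_const_mul, int_IISS_mul_Y hY hindep n, hmean (n+1) (by omega),
          mul_zero, mul_zero]
      rw [hB, hC, hD, Finset.sum_range_succ]
      ring

end BIWT

namespace BIWT
variable {Ω : Type*} {m0 : MeasurableSpace Ω} {μ : Measure Ω}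
variable {Y : ℕ → Ω → ℝ} {a b M σ2 : ℝ}

lemma incl {k : ℕ} (hk : 1 ≤ k) :
    {ω | ∀ n < k, -a < SS Y n ω} ⊆ GG Y a b (k-1) ∪ {ω | b ≤ WW Y a b k ω} := by
  classical
  intro ω hω
  by_cases hG : ω ∈ GG Y a b (k-1)
  · exact Or.inl hG
  · refine Or.inr ?_
    have hPex : ∃ j, j ≤ k-1 ∧ ¬(-a < SS Y j ω ∧ SS Y j ω < b) := by
      by_contra hc
      push_neg at hc
      exact hG fun j hj => (hc j hj)
    have hQ : ∃ j, ¬(-a < SS Y j ω ∧ SS Y j ω < b) :=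
      ⟨hPex.choose, hPex.choose_spec.2⟩
    set j₀ := Nat.find hQ with hj₀def
    have hQj₀ : ¬(-a < SS Y j₀ ω ∧ SS Y j₀ ω < b) := Nat.find_spec hQ
    have hj₀le : j₀ ≤ k - 1 :=
      le_trans (Nat.find_min' hQ hPex.choose_spec.2) hPex.choose_spec.1
    have hj₀k : j₀ < k := by omega
    have hbS : b ≤ SS Y j₀ ω := by
      have h1 : -a < SS Y j₀ ω := hω j₀ hj₀k
      by_contra hc
      push_neg at hc
      exact hQj₀ ⟨h1, hc⟩
    have hmem : ∀ j < j₀, ω ∈ GG Y a b j := by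
      intro j hj i hi
      exact not_not.1 (Nat.find_min hQ (lt_of_le_of_lt hi hj))
    have hnot : ∀ j, j₀ ≤ j → ω ∉ GG Y a b j := fun j hj hmemG => hQj₀ (hmemG j₀ hj)
    have hWk : WW Y a b k ω = SS Y j₀ ω := by
      have hsplit : WW Y a b k ω
          = ∑ j ∈ Finset.Ico 0 j₀, II Y a b j ω * Y (j+1) ω
            + ∑ j ∈ Finset.Ico j₀ k, II Y a b j ω * Y (j+1) ω := by
        rw [WW, Finset.range_eq_Ico,
          Finset.sum_Ico_consecutive _ (Nat.zero_le j₀) (le_of_lt hj₀k)]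
      have h2 : ∑ j ∈ Finset.Ico j₀ k, II Y a b j ω * Y (j+1) ω = 0 :=
        Finset.sum_eq_zero fun j hj => by
          rw [II_of_not_mem (hnot j (Finset.mem_Ico.1 hj).1), zero_mul]
      have h1 : ∑ j ∈ Finset.Ico 0 j₀, II Y a b j ω * Y (j+1) ω = SS Y j₀ ω := by
        rw [← Finset.range_eq_Ico, ← reindex j₀ ω]
        exact Finset.sum_congr rfl fun j hj => by
          rw [II_of_mem (hmem j (Finset.mem_range.1 hj)), one_mul]
      rw [hsplit, h1, h2, add_zero]
    show b ≤ WW Y a b k ω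
    rw [hWk]; exact hbS

theorem corridor_tail [IsProbabilityMeasure μ]
    (hY : ∀ i, Measurable (Y i))
    (hindep : iIndepFun Y μ)
    (hM0 : 0 ≤ M) (hM : ∀ᵐ ω ∂μ, ∀ i, |Y i ω| ≤ M)
    (hmean : ∀ i, 1 ≤ i → ∫ ω, Y i ω ∂μ = 0)
    (hσ2 : 0 < σ2) (hsq : ∀ i, 1 ≤ i → ∫ ω, (Y i ω)^2 ∂μ = σ2)
    (ha : 1 ≤ a) (hb : 1 ≤ b) {k : ℕ} (hk : 1 ≤ k) :
    (μ {ω | ∀ n < k, -a < SS Y n ω}).toReal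
      ≤ (a*b + M*(a+b+M))/(σ2 * (k:ℝ)) + (a+M)/b := by
  have hkR : (1:ℝ) ≤ (k:ℝ) := by exact_mod_cast hk
  -- Step 1: corridor-survival bound
  have hGb : (μ (GG Y a b (k-1))).toReal ≤ (a*b + M*(a+b+M))/(σ2 * (k:ℝ)) := by
    have hlow : -(M*(a+b+M)) ≤ ∫ ω, (WW Y a b k ω + a) * (b - WW Y a b k ω) ∂μ := by
      have : ∫ _ω, -(M*(a+b+M)) ∂μ ≤ ∫ ω, (WW Y a b k ω + a) * (b - WW Y a b k ω) ∂μ := by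
        refine integral_mono_ae (integrable_const _) (integrable_f_WW hY hM k) ?_
        filter_upwards [hM] with ω hω
        have hWb := WW_bound (a:=a) (b:=b) (by linarith) (by linarith) hω k
        nlinarith [mul_nonneg (by linarith [hWb.1] : (0:ℝ) ≤ WW Y a b k ω + a + M)
          (by linarith [hWb.2] : (0:ℝ) ≤ b + M - WW Y a b k ω)]
      simpa using this
    rw [int_f_WW hY hindep hM hmean hsq k] at hlow
    have hsum : (k:ℝ) * (μ (GG Y a b (k-1))).toReal
        ≤ ∑ j ∈ Finset.range k, (μ (GG Y a b j)).toReal := by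
      have : ∀ j ∈ Finset.range k, (μ (GG Y a b (k-1))).toReal ≤ (μ (GG Y a b j)).toReal := by
        intro j hj
        exact ENNReal.toReal_mono (measure_ne_top μ _)
          (measure_mono (GG_antitone (by have := Finset.mem_range.1 hj; omega)))
      calc (k:ℝ) * (μ (GG Y a b (k-1))).toReal
          = ∑ _j ∈ Finset.range k, (μ (GG Y a b (k-1))).toReal := by
            rw [Finset.sum_const, Finset.card_range, nsmul_eq_mul]
        _ ≤ _ := Finset.sum_le_sum this
    have hpos : 0 < σ2 * (k:ℝ) := by positivity
    rw [le_div_iff₀ hpos]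
    nlinarith [hsum, hlow, hσ2.le]
  -- Step 2: upward-exit bound
  have hupset : MeasurableSet {ω | b ≤ WW Y a b k ω} :=
    measurableSet_le measurable_const (meas_WW hY k)
  have hup : (μ {ω | b ≤ WW Y a b k ω}).toReal ≤ (a+M)/b := by
    have hptw : ∀ᵐ ω ∂μ, ({ω | b ≤ WW Y a b k ω}).indicator (fun _ => b) ω
        ≤ WW Y a b k ω + (a+M) := by
      filter_upwards [hM] with ω hω
      have hWb := WW_bound (a:=a) (b:=b) (by linarith) (by linarith) hω k
      by_cases h : ω ∈ {ω | b ≤ WW Y a b k ω}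
      · rw [Set.indicator_of_mem h]
        have : b ≤ WW Y a b k ω := h
        linarith
      · rw [Set.indicator_of_notMem h]
        linarith [hWb.1]
    have hint : ∫ ω, ({ω | b ≤ WW Y a b k ω}).indicator (fun _ => b) ω ∂μ
        ≤ ∫ ω, (WW Y a b k ω + (a+M)) ∂μ := by
      refine integral_mono_ae ?_ ((integrable_WW hY hM k).add (integrable_const _)) hptw
      exact (integrable_const b).indicator hupset
    rw [integral_indicator_const _ hupset] at hint
    rw [integral_add (integrable_WW hY hM k) (integrable_const _), integral_const,
      int_WW hY hindep hM hmean k] at hint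
    simp only [Measure.real, smul_eq_mul, measure_univ, ENNReal.toReal_one, one_mul, zero_add] at hint
    rw [le_div_iff₀ (by linarith : (0:ℝ) < b)]
    linarith [hint]
  -- Step 3: combine
  have h1 : μ {ω | ∀ n < k, -a < SS Y n ω}
      ≤ μ (GG Y a b (k-1)) + μ {ω | b ≤ WW Y a b k ω} :=
    le_trans (measure_mono (incl hk)) (measure_union_le _ _)
  have h2 : (μ {ω | ∀ n < k, -a < SS Y n ω}).toReal
      ≤ (μ (GG Y a b (k-1))).toReal + (μ {ω | b ≤ WW Y a b k ω}).toReal := by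
    calc (μ {ω | ∀ n < k, -a < SS Y n ω}).toReal
        ≤ (μ (GG Y a b (k-1)) + μ {ω | b ≤ WW Y a b k ω}).toReal :=
          ENNReal.toReal_mono
            (ENNReal.add_ne_top.2 ⟨measure_ne_top μ _, measure_ne_top μ _⟩) h1
      _ = _ := ENNReal.toReal_add (measure_ne_top μ _) (measure_ne_top μ _)
  linarith

end BIWT

namespace BIWT
variable {Ω : Type*} {m0 : MeasurableSpace Ω} {μ : Measure Ω}
variable {Y : ℕ → Ω → ℝ} {M : ℝ}

lemma negmean_tail [IsProbabilityMeasure μ]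
    (hY : ∀ i, Measurable (Y i))
    (hindep : iIndepFun Y μ)
    (hM : ∀ᵐ ω ∂μ, ∀ i, |Y i ω| ≤ M)
    {mm : ℝ} (hmm : mm < 0) (hmeani : ∀ i, 1 ≤ i → ∫ ω, Y i ω ∂μ = mm)
    {v : ℝ} (hv : 0 < v) (hvari : ∀ i, 1 ≤ i → variance (Y i) μ = v)
    {a : ℝ} (ha : 1 ≤ a) {n : ℕ} (hn : 1 ≤ n) (hna : 2*a/(-mm) ≤ (n:ℝ)) :
    (μ {ω | -a < SS Y n ω}).toReal ≤ 4*v/((n:ℝ) * mm^2) := by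
  have hnR : (1:ℝ) ≤ (n:ℝ) := by exact_mod_cast hn
  have hMem : ∀ i, MemLp (Y i) 2 μ := by
    intro i
    refine (memLp_top_of_bound (hY i).aestronglyMeasurable M ?_).mono_exponent le_top
    filter_upwards [hM] with ω hω
    simpa [Real.norm_eq_abs] using hω i
  set F : Ω → ℝ := ∑ i ∈ Finset.Icc 1 n, Y i with hF
  have hFapp : ∀ ω, F ω = SS Y n ω := by
    intro ω; rw [hF, Finset.sum_apply]; rfl
  have hMemF : MemLp F 2 μ := memLp_finset_sum' _ (fun i _ => hMem i)
  have hEF : ∫ ω, F ω ∂μ = (n:ℝ) * mm := by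
    have : ∫ ω, F ω ∂μ = ∑ i ∈ Finset.Icc 1 n, ∫ ω, Y i ω ∂μ := by
      simp only [hFapp]
      rw [show (fun ω => SS Y n ω) = fun ω => ∑ i ∈ Finset.Icc 1 n, Y i ω from rfl]
      exact integral_finset_sum _ (fun i _ => (hMem i).integrable one_le_two)
    rw [this, Finset.sum_congr rfl (fun i hi => hmeani i (Finset.mem_Icc.1 hi).1),
      Finset.sum_const, Nat.card_Icc, nsmul_eq_mul]
    norm_num
  have hvarF : variance F μ = (n:ℝ) * v := by
    rw [hF, IndepFun.variance_sum (fun i _ => hMem i)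
      (fun i _ j _ hij => hindep.indepFun hij),
      Finset.sum_congr rfl (fun i hi => hvari i (Finset.mem_Icc.1 hi).1),
      Finset.sum_const, Nat.card_Icc, nsmul_eq_mul]
    norm_num
  set c : ℝ := (n:ℝ) * (-mm) / 2 with hc
  have hmm' : 0 < -mm := by linarith
  have hcpos : 0 < c := by
    rw [hc]; positivity
  have hsub : {ω | -a < SS Y n ω} ⊆ {ω | c ≤ |F ω - μ[F]|} := by
    intro ω hω
    have h1 : -a < SS Y n ω := hω
    have h2 : μ[F] = (n:ℝ) * mm := hEF
    have h3 : 2*a ≤ (n:ℝ) * (-mm) := by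
      rw [div_le_iff₀ (by linarith : (0:ℝ) < -mm)] at hna
      linarith
    have h4 : c ≤ F ω - μ[F] := by
      rw [hFapp, h2]
      rw [hc]
      nlinarith
    exact le_trans h4 (le_abs_self _)
  have hcheb := meas_ge_le_variance_div_sq (μ := μ) hMemF hcpos
  have hmono : μ {ω | -a < SS Y n ω} ≤ μ {ω | c ≤ |F ω - μ[F]|} := measure_mono hsub
  have hfin : (μ {ω | -a < SS Y n ω}).toReal ≤ variance F μ / c^2 := by
    calc (μ {ω | -a < SS Y n ω}).toReal
        ≤ (ENNReal.ofReal (variance F μ / c^2)).toReal :=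
          ENNReal.toReal_mono ENNReal.ofReal_ne_top (le_trans hmono hcheb)
      _ = variance F μ / c^2 :=
          ENNReal.toReal_ofReal (div_nonneg (variance_nonneg F μ) (sq_nonneg c))
  rw [hvarF] at hfin
  have h5 : (n:ℝ) * v / c^2 = 4*v/((n:ℝ) * mm^2) := by
    rw [hc]
    have hn0 : (n:ℝ) ≠ 0 := by linarith
    have hmm0 : mm ≠ 0 := by linarith
    field_simp
    ring
  rw [h5] at hfin
  exact hfin

end BIWT

namespace BIWT

lemma eventually_small (C : ℝ) (hC : 0 < C) (K : ℕ) (ε : ℝ) (hε : 0 < ε) :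
    ∃ k : ℕ, K ≤ k ∧ C / Real.sqrt k < ε := by
  refine ⟨max K (⌈(C/ε)^2⌉₊ + 1), le_max_left _ _, ?_⟩
  set k : ℕ := max K (⌈(C/ε)^2⌉₊ + 1) with hkdef
  have hck : ((C/ε)^2 : ℝ) < (k:ℝ) := by
    have h1 : ((C/ε)^2 : ℝ) ≤ (⌈(C/ε)^2⌉₊ : ℝ) := Nat.le_ceil _
    have h2 : ((⌈(C/ε)^2⌉₊ : ℕ) : ℝ) + 1 ≤ (k:ℝ) := by
      have : ⌈(C/ε)^2⌉₊ + 1 ≤ k := le_max_right _ _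
      exact_mod_cast this
    linarith
  have hsq : C/ε < Real.sqrt k := by
    have h0 : (0:ℝ) ≤ C/ε := le_of_lt (by positivity)
    have := Real.sqrt_lt_sqrt (by positivity) hck
    rwa [Real.sqrt_sq h0] at this
  have hs0 : (0:ℝ) < Real.sqrt k := lt_of_le_of_lt (by positivity) hsq
  rw [div_lt_iff₀ hs0]
  rw [div_lt_iff₀ hε] at hsq
  linarith

end BIWT

open BIWT

/-- **Almost-sure termination with `O(1/√k)` tail for the loop
`while x ≥ 1 do x := x + r od` with bounded-range sampling of nonpositive mean
and nonzero variance.**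
`T = min {n | X n ≤ 0}`; `P(T < ∞) = μ {ω | ∃ n, X n ω ≤ 0}` and
`P(T ≥ k) = μ {ω | ∀ n < k, 0 < X n ω}`. -/
theorem bounded_increment_walk_termination
    {Ω : Type*} {m0 : MeasurableSpace Ω} (μ : Measure Ω) [IsProbabilityMeasure μ]
    (R : ℕ → Ω → ℤ) (hmeas : ∀ n, Measurable (R n))
    (hindep : iIndepFun R μ)
    (hident : ∀ n, IdentDistrib (R n) (R 0) μ μ)
    (M : ℕ) (hbound : ∀ n, ∀ᵐ ω ∂μ, |R n ω| ≤ (M : ℤ))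
    (hmean : ∫ ω, (R 0 ω : ℝ) ∂μ ≤ 0)
    (hvar : 0 < variance (fun ω => (R 0 ω : ℝ)) μ)
    (x₀ : ℤ)
    (X : ℕ → Ω → ℤ) (hX0 : ∀ ω, X 0 ω = x₀)
    (hXrec : ∀ n ω, X (n + 1) ω =
      if 1 ≤ X n ω then X n ω + R (n + 1) ω else X n ω) :
    μ {ω | ∃ n : ℕ, X n ω ≤ 0} = 1 ∧
      ∃ C > (0 : ℝ), ∃ K : ℕ, ∀ k : ℕ, K ≤ k →
        (μ {ω | ∀ n < k, 0 < X n ω}).toReal ≤ C / Real.sqrt k := by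
  classical
  -- measurability of X
  have hXmeas : ∀ n, Measurable (X n) := by
    intro n
    induction n with
    | zero =>
        have : X 0 = fun _ => x₀ := funext hX0
        rw [this]; exact measurable_const
    | succ n ih =>
        have : X (n+1) = fun ω => if 1 ≤ X n ω then X n ω + R (n+1) ω else X n ω :=
          funext (hXrec n)
        rw [this]
        exact Measurable.ite
          (ih (MeasurableSpace.measurableSet_top (s := {z : ℤ | 1 ≤ z})))
          (ih.add (hmeas (n+1))) ih
  have hEvMeas : ∀ k : ℕ, MeasurableSet {ω | ∀ n < k, 0 < X n ω} := by
    intro k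
    have : {ω | ∀ n < k, 0 < X n ω} = ⋂ n, ⋂ (_ : n < k), {ω | 0 < X n ω} := by
      ext ω; simp
    rw [this]
    exact MeasurableSet.iInter fun n => MeasurableSet.iInter fun _ =>
      (hXmeas n) (MeasurableSpace.measurableSet_top (s := {z : ℤ | 0 < z}))
  have hTermMeas : MeasurableSet {ω | ∃ n, X n ω ≤ 0} := by
    have : {ω | ∃ n, X n ω ≤ 0} = ⋃ n, {ω | X n ω ≤ 0} := by ext ω; simp
    rw [this]
    exact MeasurableSet.iUnion fun n =>
      (hXmeas n) (MeasurableSpace.measurableSet_top (s := {z : ℤ | z ≤ 0}))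
  by_cases hx0 : x₀ ≤ 0
  · -- trivial case: starts nonpositive
    constructor
    · have : {ω | ∃ n, X n ω ≤ 0} = Set.univ :=
        Set.eq_univ_of_forall fun ω => ⟨0, by rw [hX0]; exact hx0⟩
      rw [this, measure_univ]
    · refine ⟨1, one_pos, 1, fun k hk => ?_⟩
      have hempty : {ω | ∀ n < k, 0 < X n ω} = ∅ := by
        ext ω
        simp only [Set.mem_setOf_eq, Set.mem_empty_iff_false, iff_false, not_forall]
        exact ⟨0, by omega, by rw [hX0]; omega⟩
      rw [hempty, measure_empty]
      simp only [ENNReal.toReal_zero]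
      positivity
  · push_neg at hx0
    have hx1 : (1:ℤ) ≤ x₀ := hx0
    -- real-valued steps
    set Yc : ℕ → Ω → ℝ := fun i ω => (R i ω : ℝ) with hYcdef
    have hYmeas : ∀ i, Measurable (Yc i) := fun i => measurable_from_top.comp (hmeas i)
    have hindepY : iIndepFun Yc μ :=
      hindep.comp (fun _ => (fun z : ℤ => (z:ℝ))) (fun _ => measurable_from_top)
    have hidentY : ∀ i, IdentDistrib (Yc i) (Yc 0) μ μ := fun i =>
      (hident i).comp (measurable_from_top (f := fun z : ℤ => (z:ℝ)))
    have hMae : ∀ᵐ ω ∂μ, ∀ i, |Yc i ω| ≤ (M:ℝ) := by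
      rw [MeasureTheory.ae_all_iff]
      intro i
      filter_upwards [hbound i] with ω hω
      show |((R i ω : ℤ) : ℝ)| ≤ (M:ℝ)
      exact_mod_cast hω
    have hM0 : (0:ℝ) ≤ (M:ℝ) := by positivity
    set mm : ℝ := ∫ ω, (R 0 ω : ℝ) ∂μ with hmmdef
    have hmeanall : ∀ i, ∫ ω, Yc i ω ∂μ = mm := fun i => (hidentY i).integral_eq
    set a : ℝ := (x₀ : ℝ) with hadef
    have ha : 1 ≤ a := by rw [hadef]; exact_mod_cast hx1
    -- reduction: while positive, X is the random walk
    have hXsum : ∀ ω n, (∀ j < n, 0 < X j ω) → 0 < X n ω →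
        X n ω = x₀ + ∑ i ∈ Finset.Icc 1 n, R i ω := by
      intro ω n
      induction n with
      | zero => intro _ _; simp [hX0]
      | succ n ih =>
          intro hj hpos
          have h1 : 0 < X n ω := hj n (by omega)
          have h1' : (1:ℤ) ≤ X n ω := h1
          have h2 : X n ω = x₀ + ∑ i ∈ Finset.Icc 1 n, R i ω :=
            ih (fun j hjn => hj j (by omega)) h1
          rw [hXrec n ω, if_pos h1', h2, Finset.sum_Icc_succ_top (by omega)]
          ring
    have hincl : ∀ k : ℕ, {ω | ∀ n < k, 0 < X n ω} ⊆ {ω | ∀ n < k, -a < SS Yc n ω} := by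
      intro k ω hω n hn
      have hX := hXsum ω n (fun j hj => hω j (hj.trans hn)) (hω n hn)
      have h0 : 0 < x₀ + ∑ i ∈ Finset.Icc 1 n, R i ω := hX ▸ hω n hn
      have h1 : -(x₀:ℝ) < ((∑ i ∈ Finset.Icc 1 n, R i ω : ℤ) : ℝ) := by
        have : -x₀ < ∑ i ∈ Finset.Icc 1 n, R i ω := by omega
        exact_mod_cast this
      have h2 : SS Yc n ω = ((∑ i ∈ Finset.Icc 1 n, R i ω : ℤ) : ℝ) := by
        rw [SS]; push_cast; rfl
      show -a < SS Yc n ω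
      rw [h2]
      exact h1
    -- tail bound (part 2)
    have hpart2 : ∃ C > (0 : ℝ), ∃ K : ℕ, ∀ k : ℕ, K ≤ k →
        (μ {ω | ∀ n < k, 0 < X n ω}).toReal ≤ C / Real.sqrt k := by
      by_cases hmm0 : mm = 0
      · -- zero mean: corridor bound
        set σ2 : ℝ := ∫ ω, (Yc 0 ω)^2 ∂μ with hσ2def
        have hMem0 : MemLp (Yc 0) 2 μ := by
          refine (memLp_top_of_bound (hYmeas 0).aestronglyMeasurable (M:ℝ)
            ?_).mono_exponent le_top
          filter_upwards [hMae] with ω hω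
          simpa [Real.norm_eq_abs] using hω 0
        have hvar0 : variance (Yc 0) μ = σ2 := by
          rw [variance_eq_sub hMem0]
          have : ∫ ω, (Yc 0 ^ 2) ω ∂μ = σ2 := by
            simp only [Pi.pow_apply, hσ2def]
          rw [this]
          have : μ[Yc 0] = mm := hmeanall 0
          rw [this, hmm0]
          ring
        have hσ2 : 0 < σ2 := by rw [← hvar0]; exact hvar
        have hsq : ∀ i, 1 ≤ i → ∫ ω, (Yc i ω)^2 ∂μ = σ2 := by
          intro i _
          have := ((hident i).comp
            (measurable_from_top (f := fun z : ℤ => ((z:ℝ))^2))).integral_eq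
          exact this
        have hmeanz : ∀ i, 1 ≤ i → ∫ ω, Yc i ω ∂μ = 0 := fun i _ => by
          rw [hmeanall i, hmm0]
        set C : ℝ := (a + (M:ℝ)*a + (M:ℝ) + (M:ℝ)^2)/σ2 + (a + (M:ℝ)) with hCdef
        have hCpos : 0 < C := by
          have h1 : 0 < a + (M:ℝ)*a + (M:ℝ) + (M:ℝ)^2 := by
            nlinarith [mul_nonneg hM0 (by linarith : (0:ℝ) ≤ a), sq_nonneg (M:ℝ)]
          have h2 : 0 < (a + (M:ℝ)*a + (M:ℝ) + (M:ℝ)^2)/σ2 := by positivity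
          rw [hCdef]
          nlinarith
        refine ⟨C, hCpos, 1, fun k hk => ?_⟩
        set s : ℝ := Real.sqrt k with hsdef
        have hkR : (1:ℝ) ≤ (k:ℝ) := by exact_mod_cast hk
        have hs1 : 1 ≤ s := by rw [hsdef]; rw [Real.one_le_sqrt]; exact hkR
        have hss : s * s = (k:ℝ) := Real.mul_self_sqrt (by positivity)
        have hb := corridor_tail (μ := μ) (Y := Yc) (a := a) (b := s)
          hYmeas hindepY hM0 hMae hmeanz hσ2 hsq ha hs1 hk
        have hmono : (μ {ω | ∀ n < k, 0 < X n ω}).toReal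
            ≤ (μ {ω | ∀ n < k, -a < SS Yc n ω}).toReal :=
          ENNReal.toReal_mono (measure_ne_top μ _) (measure_mono (hincl k))
        have hs0 : (0:ℝ) < s := by linarith
        have harith : (a*s + (M:ℝ)*(a+s+(M:ℝ)))/(σ2 * (k:ℝ)) + (a+(M:ℝ))/s ≤ C / s := by
          have hsa : (0:ℝ) ≤ s - 1 := by linarith
          have hnum : a*s + (M:ℝ)*(a+s+(M:ℝ)) ≤ (a + (M:ℝ)*a + (M:ℝ) + (M:ℝ)^2) * s := by
            nlinarith [mul_nonneg hsa (mul_nonneg hM0 (by linarith : (0:ℝ) ≤ a)),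
              mul_nonneg hsa (mul_nonneg hM0 hM0)]
          have h1 : (a*s + (M:ℝ)*(a+s+(M:ℝ)))/(σ2 * (k:ℝ))
              ≤ ((a + (M:ℝ)*a + (M:ℝ) + (M:ℝ)^2) * s)/(σ2 * (k:ℝ)) :=
            (div_le_div_iff_of_pos_right (by positivity)).2 hnum
          have h2 : ((a + (M:ℝ)*a + (M:ℝ) + (M:ℝ)^2) * s)/(σ2 * (k:ℝ))
              = (a + (M:ℝ)*a + (M:ℝ) + (M:ℝ)^2)/(σ2 * s) := by
            rw [show ((k:ℝ)) = s*s from hss.symm]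
            have hσ0 : σ2 ≠ 0 := ne_of_gt hσ2
            have hs0' : s ≠ 0 := ne_of_gt hs0
            field_simp
          have h3 : C / s = (a + (M:ℝ)*a + (M:ℝ) + (M:ℝ)^2)/(σ2 * s) + (a+(M:ℝ))/s := by
            rw [hCdef, add_div, div_div]
          rw [h3]
          have := h1.trans_eq h2
          linarith
        exact (hmono.trans hb).trans harith
      · -- negative mean: Chebyshev
        have hmmneg : mm < 0 := lt_of_le_of_ne hmean hmm0
        set v : ℝ := variance (fun ω => (R 0 ω : ℝ)) μ with hvdef
        have hv : 0 < v := hvar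
        have hvari : ∀ i, 1 ≤ i → variance (Yc i) μ = v := fun i _ =>
          (hidentY i).variance_eq
        have hmeani : ∀ i, 1 ≤ i → ∫ ω, Yc i ω ∂μ = mm := fun i _ => hmeanall i
        set C : ℝ := 8 * v / mm^2 with hCdef
        have hmm2 : (0:ℝ) < mm^2 := by positivity
        have hCpos : 0 < C := by rw [hCdef]; positivity
        set K : ℕ := max 2 (⌈2*a/(-mm)⌉₊ + 1) with hKdef
        refine ⟨C, hCpos, K, fun k hk => ?_⟩
        have hk2 : 2 ≤ k := le_trans (le_max_left _ _) hk
        have hkc : ⌈2*a/(-mm)⌉₊ + 1 ≤ k := le_trans (le_max_right _ _) hk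
        have hn1 : 1 ≤ k - 1 := by omega
        have hnk : ((k-1 : ℕ):ℝ) = (k:ℝ) - 1 := by
          push_cast [Nat.cast_sub (by omega : 1 ≤ k)]; ring
        have hna : 2*a/(-mm) ≤ ((k-1:ℕ):ℝ) := by
          have h1 : (2*a/(-mm)) ≤ (⌈2*a/(-mm)⌉₊ : ℝ) := Nat.le_ceil _
          have h2 : (⌈2*a/(-mm)⌉₊ : ℝ) ≤ ((k-1:ℕ):ℝ) := by
            exact_mod_cast (by omega : ⌈2*a/(-mm)⌉₊ ≤ k - 1)
          linarith
        have hcheb := negmean_tail (μ := μ) (Y := Yc) hYmeas hindepY hMae hmmneg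
          hmeani hv hvari ha hn1 hna
        have hsub2 : {ω | ∀ n < k, 0 < X n ω} ⊆ {ω | -a < SS Yc (k-1) ω} := fun ω hω =>
          hincl k hω (k-1) (by omega)
        have hmono : (μ {ω | ∀ n < k, 0 < X n ω}).toReal
            ≤ (μ {ω | -a < SS Yc (k-1) ω}).toReal :=
          ENNReal.toReal_mono (measure_ne_top μ _) (measure_mono hsub2)
        have hkR : (2:ℝ) ≤ (k:ℝ) := by exact_mod_cast hk2
        have hfinal : 4*v/(((k-1:ℕ):ℝ) * mm^2) ≤ C / Real.sqrt k := by
          have hs0 : (0:ℝ) < Real.sqrt k := Real.sqrt_pos.2 (by linarith)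
          have hsk : Real.sqrt k ≤ (k:ℝ) := by
            nlinarith [Real.mul_self_sqrt (by positivity : (0:ℝ) ≤ (k:ℝ)),
              Real.one_le_sqrt.2 (by linarith : (1:ℝ) ≤ (k:ℝ)), Real.sqrt_nonneg (k:ℝ)]
          have hhalf : (k:ℝ)/2 ≤ ((k-1:ℕ):ℝ) := by rw [hnk]; linarith
          have h1 : 4*v/(((k-1:ℕ):ℝ) * mm^2) ≤ 4*v/(((k:ℝ)/2) * mm^2) := by
            apply div_le_div_of_nonneg_left (by positivity) (by positivity)
            apply mul_le_mul_of_nonneg_right hhalf (le_of_lt hmm2)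
          have h2 : 4*v/(((k:ℝ)/2) * mm^2) = C / (k:ℝ) := by
            rw [hCdef]
            field_simp
            ring
          have h3 : C / (k:ℝ) ≤ C / Real.sqrt k :=
            div_le_div_of_nonneg_left (le_of_lt hCpos) hs0 hsk
          linarith [h1.trans_eq h2]
        exact hmono.trans (hcheb.trans hfinal)
    obtain ⟨C, hC, K, hbd⟩ := hpart2
    constructor
    · -- part 1 from part 2
      rw [← prob_compl_eq_zero_iff hTermMeas]
      have hsub : ∀ k : ℕ, {ω | ∃ n, X n ω ≤ 0}ᶜ ⊆ {ω | ∀ n < k, 0 < X n ω} := by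
        intro k ω hω n _
        simp only [Set.mem_compl_iff, Set.mem_setOf_eq, not_exists] at hω
        exact lt_of_not_ge (hω n)
      by_contra hne
      have hpos : 0 < (μ {ω | ∃ n, X n ω ≤ 0}ᶜ).toReal :=
        ENNReal.toReal_pos hne (measure_ne_top μ _)
      obtain ⟨k, hkK, hlt⟩ := eventually_small C hC K _ hpos
      have hbd' : (μ {ω | ∃ n, X n ω ≤ 0}ᶜ).toReal ≤ C / Real.sqrt k := by
        refine le_trans ?_ (hbd k hkK)
        exact ENNReal.toReal_mono (measure_ne_top μ _) (measure_mono (hsub k))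
      linarith
    · exact ⟨C, hC, K, hbd⟩
end

section
/- Fix p ∈ (0,1) and let {R_n}_{n∈ℕ} be i.i.d. integer-valued random variables with the two-sided geometric distribution: P(R_n = k) = (1−p)^{k−1}·p/2 for integers k > 0 and P(R_n = k) = (1−p)^{−k−1}·p/2 for integers k < 0 (and P(R_n = 0) = 0). Fix an integer x₀ and define X_0 = x₀ and X_{n+1} = X_n + R_{n+1} if X_n ≥ 1, and X_{n+1} = X_n otherwise. Then P(∃ n such that X_n ≤ 0) = 1; that is, the loop 'while x ≥ 1 do x := x + r od' with two-sided geometric sampling terminates almost surely from every initial value. -/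
open MeasureTheory ProbabilityTheory Filter MeasurableSpace
open scoped ENNReal

section TGAux
variable {Ω : Type*} {m0 : MeasurableSpace Ω} (μ : Measure Ω) [IsProbabilityMeasure μ]
  (p : ℝ) (R : ℕ → Ω → ℤ)

omit [IsProbabilityMeasure μ] in
lemma tg_f_symm (k : ℤ) :
    (if -k = 0 then (0:ℝ) else (1 - p) ^ ((-k).natAbs - 1) * p / 2)
      = (if k = 0 then 0 else (1 - p) ^ (k.natAbs - 1) * p / 2) := by
  simp [neg_eq_zero]

omit [IsProbabilityMeasure μ] in
lemma tg_atom (hindep : iIndepFun R μ) (s : Finset ℕ) (y : ℕ → ℤ) :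
    μ (⋂ i ∈ s, R i ⁻¹' {y i}) = ∏ i ∈ s, μ (R i ⁻¹' {y i}) :=
  hindep.measure_inter_preimage_eq_mul s (fun _ _ => trivial)

lemma tg_map_eq (hmeas : ∀ n, Measurable (R n))
    (hindep : iIndepFun R μ)
    (hdist : ∀ n : ℕ, ∀ k : ℤ,
      μ {ω | R n ω = k} =
        ENNReal.ofReal (if k = 0 then 0 else (1 - p) ^ (k.natAbs - 1) * p / 2)) :
    μ.map (fun ω (i : ℕ) => R i ω) = μ.map (fun ω (i : ℕ) => -R i ω) := by
  have hΦ : Measurable (fun ω (i : ℕ) => R i ω) := measurable_pi_lambda _ hmeas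
  have hΨ : Measurable (fun ω (i : ℕ) => -R i ω) :=
    measurable_pi_lambda _ (fun i => (hmeas i).neg)
  haveI : IsProbabilityMeasure (μ.map (fun ω (i : ℕ) => R i ω)) :=
    Measure.isProbabilityMeasure_map hΦ.aemeasurable
  refine ext_of_generate_finite (measurableCylinders (fun _ : ℕ => ℤ))
    generateFrom_measurableCylinders.symm isPiSystem_measurableCylinders ?_ ?_
  · intro t ht
    obtain ⟨s, S, hS, rfl⟩ := (mem_measurableCylinders t).1 ht
    rw [Measure.map_apply hΦ (hS.cylinder),
      Measure.map_apply hΨ (hS.cylinder)]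
    have hφ : Measurable (fun ω (i : s) => R i ω) := measurable_pi_lambda _ (fun i => hmeas i)
    have hψ : Measurable (fun ω (i : s) => -R i ω) :=
      measurable_pi_lambda _ (fun i => (hmeas i).neg)
    have h1 : (fun ω (i : ℕ) => R i ω) ⁻¹' cylinder s S
        = (fun ω (i : s) => R i ω) ⁻¹' S := rfl
    have h2 : (fun ω (i : ℕ) => -R i ω) ⁻¹' cylinder s S
        = (fun ω (i : s) => -R i ω) ⁻¹' S := rfl
    rw [h1, h2, ← Measure.map_apply hφ hS, ← Measure.map_apply hψ hS]
    congr 1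
    refine Measure.ext_of_singleton (fun y₀ => ?_)
    rw [Measure.map_apply hφ (measurableSet_singleton _),
      Measure.map_apply hψ (measurableSet_singleton _)]
    set y : ℕ → ℤ := fun i => if h : i ∈ s then y₀ ⟨i, h⟩ else 0 with hy
    have e1 : (fun ω (i : s) => R i ω) ⁻¹' {y₀} = ⋂ i ∈ s, R i ⁻¹' {y i} := by
      ext ω
      simp only [Set.mem_preimage, Set.mem_singleton_iff, funext_iff, Set.mem_iInter, hy]
      constructor
      · rintro h i hi; simp [hi, h ⟨i, hi⟩]
      · rintro h ⟨i, hi⟩; have := h i hi; simpa [hi] using this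
    have e2 : (fun ω (i : s) => -R i ω) ⁻¹' {y₀} = ⋂ i ∈ s, R i ⁻¹' {-y i} := by
      ext ω
      simp only [Set.mem_preimage, Set.mem_singleton_iff, funext_iff, Set.mem_iInter, hy]
      constructor
      · rintro h i hi
        have h2 : -R i ω = y₀ ⟨i, hi⟩ := h ⟨i, hi⟩
        simp only [dif_pos hi]
        omega
      · rintro h ⟨i, hi⟩
        have h2 : R i ω = -(if h : i ∈ s then y₀ ⟨i, h⟩ else 0) := h i hi
        simp only [dif_pos hi] at h2
        show -R i ω = y₀ ⟨i, hi⟩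
        omega
    rw [e1, e2, tg_atom μ R hindep, tg_atom μ R hindep]
    refine Finset.prod_congr rfl (fun i hi => ?_)
    have d1 : R i ⁻¹' {y i} = {ω | R i ω = y i} := rfl
    have d2 : R i ⁻¹' {-y i} = {ω | R i ω = -y i} := rfl
    rw [d1, d2, hdist, hdist, tg_f_symm]
  · rw [Measure.map_apply hΨ MeasurableSet.univ]
    simp

omit [IsProbabilityMeasure μ] in
lemma tg_iIndep_mono {m m' : ℕ → MeasurableSpace Ω} (h : ∀ i, m i ≤ m' i)
    (hi : iIndep m' μ) : iIndep m μ := by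
  rw [iIndep_iff] at hi ⊢
  exact fun s f hf => hi s (fun i hi' => h i _ (hf i hi'))

lemma tg_bigjump (hp : p ∈ Set.Ioo (0 : ℝ) 1) (hmeas : ∀ n, Measurable (R n))
    (hindep : iIndepFun R μ)
    (hdist : ∀ n : ℕ, ∀ k : ℤ,
      μ {ω | R n ω = k} =
        ENNReal.ofReal (if k = 0 then 0 else (1 - p) ^ (k.natAbs - 1) * p / 2))
    (M : ℕ) :
    μ (limsup (fun k => R k ⁻¹' {(2 * (M:ℤ) + 1)}) atTop) = 1 := by
  set v : ℤ := 2 * (M:ℤ) + 1 with hv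
  have hvne : v ≠ 0 := by omega
  have hvabs : v.natAbs - 1 = 2 * M := by omega
  have hc : ∀ k, μ (R k ⁻¹' {v}) = ENNReal.ofReal ((1 - p) ^ (2 * M) * p / 2) := by
    intro k
    have : R k ⁻¹' {v} = {ω | R k ω = v} := rfl
    rw [this, hdist, if_neg hvne, hvabs]
  have hcpos : (0:ℝ) < (1 - p) ^ (2 * M) * p / 2 := by
    have h1 : (0:ℝ) < 1 - p := by linarith [hp.2]
    exact div_pos (mul_pos (pow_pos h1 _) hp.1) two_pos
  refine measure_limsup_eq_one (fun k => (hmeas k) (measurableSet_singleton v)) ?_ ?_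
  · rw [iIndepSet_iff_iIndep]
    refine tg_iIndep_mono μ (fun i => ?_) hindep.iIndep
    refine MeasurableSpace.generateFrom_le ?_
    rintro t rfl
    exact ⟨{v}, trivial, rfl⟩
  · simp only [hc]
    exact ENNReal.tsum_const_eq_top_of_ne_zero
      (by simp only [ne_eq, ENNReal.ofReal_eq_zero, not_le]; exact hcpos)

lemma tg_zero_one (f : ℕ → Ω → ℤ) (hmeas : ∀ n, Measurable (f n))
    (hindep : iIndepFun f μ) :
    μ {ω | ∀ M : ℤ, ∃ n, (∑ i ∈ Finset.range n, f (i+1) ω) ≤ M} = 0 ∨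
    μ {ω | ∀ M : ℤ, ∃ n, (∑ i ∈ Finset.range n, f (i+1) ω) ≤ M} = 1 := by
  set S : ℕ → Ω → ℤ := fun n ω => ∑ i ∈ Finset.range n, f (i+1) ω with hS
  refine measure_zero_or_one_of_measurableSet_limsup_atTop
    (s := fun n => MeasurableSpace.comap (f n) inferInstance)
    (fun n => (measurable_iff_comap_le).1 (hmeas n)) hindep.iIndep ?_
  rw [limsup_eq_iInf_iSup_of_nat]
  rw [measurableSet_iInf]
  intro k
  set mk : MeasurableSpace Ω := ⨆ i ≥ k, MeasurableSpace.comap (f i) inferInstance with hmk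
  have hfk : ∀ i, k ≤ i → Measurable[mk] (f i) := fun i hi =>
    (measurable_iff_comap_le).2 (le_iSup₂ (f := fun i (_ : k ≤ i) =>
      MeasurableSpace.comap (f i) inferInstance) i hi)
  set D : ℕ → Ω → ℤ := fun n ω => ∑ i ∈ Finset.Ico k n, f (i+1) ω with hD
  have hDmeas : ∀ n, Measurable[mk] (D n) := by
    intro n
    apply Finset.measurable_sum
    intro i hi
    exact hfk (i+1) (by exact le_trans (Finset.mem_Ico.1 hi).1 (Nat.le_succ i))
  have hAeq : {ω | ∀ M : ℤ, ∃ n, S n ω ≤ M} = {ω | ∀ M : ℤ, ∃ n, D n ω ≤ M} := by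
    ext ω
    simp only [Set.mem_setOf_eq]
    have hsplit : ∀ n, k ≤ n → S n ω = S k ω + D n ω := by
      intro n hn
      rw [hS, hD]
      simp only
      rw [Finset.range_eq_Ico, Finset.range_eq_Ico]
      exact (Finset.sum_Ico_consecutive _ (Nat.zero_le k) hn).symm
    constructor
    · intro h M
      set c : ℤ := ((Finset.range (k+1)).inf' (by simp) (fun m => S m ω)) with hc
      obtain ⟨n, hn⟩ := h (min (M + S k ω) (c - 1))
      rw [le_min_iff] at hn
      have hnk : k ≤ n := by
        by_contra hlt
        push_neg at hlt
        have h3 : c ≤ S n ω := Finset.inf'_le _ (Finset.mem_range.2 (by omega))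
        omega
      have h2 := hsplit n hnk
      exact ⟨n, by omega⟩
    · intro h M
      obtain ⟨n, hn⟩ := h (min (M - S k ω) (-1))
      rw [le_min_iff] at hn
      have hnk : k ≤ n := by
        by_contra hlt
        push_neg at hlt
        have : D n ω = 0 := by
          rw [hD]; simp only
          rw [Finset.Ico_eq_empty (by omega), Finset.sum_empty]
        omega
      have h2 := hsplit n hnk
      exact ⟨n, by omega⟩
  rw [hAeq]
  have : {ω | ∀ M : ℤ, ∃ n, D n ω ≤ M} = ⋂ M : ℤ, ⋃ n, (D n) ⁻¹' (Set.Iic M) := by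
    ext ω; simp [Set.mem_iInter]
  rw [this]
  exact MeasurableSet.iInter (fun M => MeasurableSet.iUnion
    (fun n => (hDmeas n) measurableSet_Iic))

end TGAux

/-- **Almost-sure termination of `while x ≥ 1 do x := x + r od` with two-sided
geometric sampling:** `P(r = k) = (1−p)^{|k|−1}·p/2` for `k ≠ 0`, `P(r = 0) = 0`.
The loop terminates a.s. from every initial value `x₀ ∈ ℤ`. -/
theorem two_sided_geometric_walk_termination
    {Ω : Type*} {m0 : MeasurableSpace Ω} (μ : Measure Ω) [IsProbabilityMeasure μ]
    (p : ℝ) (hp : p ∈ Set.Ioo (0 : ℝ) 1)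
    (R : ℕ → Ω → ℤ) (hmeas : ∀ n, Measurable (R n))
    (hindep : iIndepFun R μ)
    (hdist : ∀ n : ℕ, ∀ k : ℤ,
      μ {ω | R n ω = k} =
        ENNReal.ofReal (if k = 0 then 0 else (1 - p) ^ (k.natAbs - 1) * p / 2)) :
    ∀ (x₀ : ℤ) (X : ℕ → Ω → ℤ), (∀ ω, X 0 ω = x₀) →
      (∀ n ω, X (n + 1) ω =
        if 1 ≤ X n ω then X n ω + R (n + 1) ω else X n ω) →
      μ {ω | ∃ n : ℕ, X n ω ≤ 0} = 1 := by
  intro x₀ X hX0 hXstep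
  -- partial sums
  set S : ℕ → Ω → ℤ := fun n ω => ∑ i ∈ Finset.range n, R (i+1) ω with hSdef
  set A : Set Ω := {ω | ∀ M : ℤ, ∃ n, S n ω ≤ M} with hAdef
  set B : Set Ω := {ω | ∀ M : ℤ, ∃ n, M ≤ S n ω} with hBdef
  -- Step 1: A ∪ B has measure one (unboundedness, via second Borel–Cantelli)
  have hG1 : ∀ M : ℕ, μ (limsup (fun k => R k ⁻¹' {(2 * (M:ℤ) + 1)}) atTop) = 1 :=
    tg_bigjump μ p R hp hmeas hindep hdist
  have hGmeas : ∀ M : ℕ, MeasurableSet (limsup (fun k => R k ⁻¹' {(2 * (M:ℤ) + 1)}) atTop) := by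
    intro M
    exact MeasurableSet.measurableSet_limsup (fun k => (hmeas k) (measurableSet_singleton _))
  set G : Set Ω := ⋂ M : ℕ, limsup (fun k => R k ⁻¹' {(2 * (M:ℤ) + 1)}) atTop with hGdef
  have hGone : μ G = 1 := by
    rw [← prob_compl_eq_zero_iff (MeasurableSet.iInter hGmeas)]
    rw [Set.compl_iInter]
    refine measure_iUnion_null (fun M => ?_)
    rw [prob_compl_eq_zero_iff (hGmeas M)]
    exact hG1 M
  have hGsub : G ⊆ A ∪ B := by
    intro ω hω
    simp only [hGdef, Set.mem_iInter] at hω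
    by_contra hcon
    simp only [Set.mem_union, hAdef, hBdef, Set.mem_setOf_eq] at hcon
    push_neg at hcon
    obtain ⟨⟨M₁, hM₁⟩, ⟨M₂, hM₂⟩⟩ := hcon
    set M : ℕ := (max (-M₁) M₂).toNat with hM
    have hMle1 : -M₁ ≤ (M:ℤ) := le_trans (le_max_left _ _) (Int.self_le_toNat _)
    have hMle2 : M₂ ≤ (M:ℤ) := le_trans (le_max_right _ _) (Int.self_le_toNat _)
    have hfreq := (mem_limsup_iff_frequently_mem).1 (hω M)
    obtain ⟨k, hk1, hk⟩ := (frequently_atTop.1 hfreq) 1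
    obtain ⟨j, rfl⟩ : ∃ j, k = j + 1 := ⟨k - 1, by omega⟩
    have hkv : R (j+1) ω = 2 * (M:ℤ) + 1 := hk
    have hSj : M₁ < S j ω := hM₁ j
    have hSj1 : S (j+1) ω < M₂ := hM₂ (j+1)
    have hstep : S (j+1) ω = S j ω + R (j+1) ω := by
      rw [hSdef]; simp only
      rw [Finset.sum_range_succ]
    omega
  -- Step 2: μ A = μ B via symmetry of the joint law
  have hΦ : Measurable (fun ω (i : ℕ) => R i ω) := measurable_pi_lambda _ hmeas
  have hΨ : Measurable (fun ω (i : ℕ) => -R i ω) :=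
    measurable_pi_lambda _ (fun i => (hmeas i).neg)
  set E : Set (ℕ → ℤ) := {x | ∀ M : ℤ, ∃ n, (∑ i ∈ Finset.range n, x (i+1)) ≤ M} with hEdef
  have hEmeas : MeasurableSet E := by
    have : E = ⋂ M : ℤ, ⋃ n, (fun x : ℕ → ℤ => ∑ i ∈ Finset.range n, x (i+1)) ⁻¹' Set.Iic M := by
      ext x; simp [hEdef, Set.mem_iInter]
    rw [this]
    refine MeasurableSet.iInter (fun M => MeasurableSet.iUnion (fun n => ?_))
    exact (Finset.measurable_sum _ (fun i _ => measurable_pi_apply (i+1))) measurableSet_Iic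
  have hAE : A = (fun ω (i : ℕ) => R i ω) ⁻¹' E := rfl
  have hBE : B = (fun ω (i : ℕ) => -R i ω) ⁻¹' E := by
    ext ω
    simp only [hBdef, Set.mem_setOf_eq, Set.mem_preimage, hEdef]
    constructor
    · intro h M
      obtain ⟨n, hn⟩ := h (-M)
      refine ⟨n, ?_⟩
      have : (∑ i ∈ Finset.range n, -R (i+1) ω) = -(S n ω) := by
        rw [hSdef]; simp [Finset.sum_neg_distrib]
      omega
    · intro h M
      obtain ⟨n, hn⟩ := h (-M)
      have : (∑ i ∈ Finset.range n, -R (i+1) ω) = -(S n ω) := by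
        rw [hSdef]; simp [Finset.sum_neg_distrib]
      exact ⟨n, by omega⟩
  have hABeq : μ A = μ B := by
    rw [hAE, hBE, ← Measure.map_apply hΦ hEmeas, ← Measure.map_apply hΨ hEmeas,
      tg_map_eq μ p R hmeas hindep hdist]
  -- Step 3: Kolmogorov zero-one law for A
  have h01 : μ A = 0 ∨ μ A = 1 := tg_zero_one μ R hmeas hindep
  have hAone : μ A = 1 := by
    rcases h01 with h0 | h1
    · exfalso
      have hle : μ (A ∪ B) ≤ μ A + μ B := measure_union_le A B
      rw [h0, ← hABeq, h0, add_zero] at hle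
      have : (1:ℝ≥0∞) ≤ μ (A ∪ B) := hGone ▸ measure_mono hGsub
      rw [le_zero_iff.1 hle] at this
      simp at this
    · exact h1
  -- Step 4: A implies termination
  have hsub : A ⊆ {ω | ∃ n : ℕ, X n ω ≤ 0} := by
    intro ω hω
    by_contra hcon
    simp only [Set.mem_setOf_eq] at hcon
    push_neg at hcon
    have hpos : ∀ m, 1 ≤ X m ω := fun m => by have := hcon m; omega
    have hXS : ∀ m, X m ω = x₀ + S m ω := by
      intro m
      induction m with
      | zero => simp [hX0, hSdef]
      | succ m ih =>
        rw [hXstep m ω, if_pos (hpos m), ih, hSdef]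
        simp only
        rw [Finset.sum_range_succ]
        ring
    obtain ⟨n, hn⟩ := hω (-x₀)
    have := hXS n
    have := hcon n
    omega
  exact le_antisymm prob_le_one (by rw [← hAone]; exact measure_mono hsub)
end

section
/- Let {(R_n, S_n)}_{n∈ℕ} be i.i.d. pairs of integer-valued random variables with R_n and S_n independent, μ₁ := E(R_1) > 0, μ₂ := E(S_1) > 0, 0 < Var(R_1) < ∞ and 0 < Var(S_1) < ∞. Fix integers x₀, y₀ and define X_n := x₀ + Σ_{k=1}^n R_k and Y_n := y₀ + Σ_{k=1}^n S_k, stopped at the first time Y_n ≤ X_n² (i.e., the increments are applied only while Y_n > X_n²). Then P(∃ n such that Y_n ≤ X_n²) = 1; that is, the loop 'while y > x² do x := x + r₁; y := y + r₂ od' terminates almost surely from every initial valuation. -/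
open MeasureTheory ProbabilityTheory Filter

lemma det_aux (a b : ℕ → ℝ) (x₀ y₀ μ₁ μ₂ : ℝ) (hμ₁ : 0 < μ₁)
    (ha : Tendsto (fun n : ℕ => a n / n) atTop (nhds μ₁))
    (hb : Tendsto (fun n : ℕ => b n / n) atTop (nhds μ₂)) :
    ∃ n : ℕ, y₀ + b n ≤ (x₀ + a n) ^ 2 := by
  have hx : Tendsto (fun n : ℕ => (x₀ + a n) / n) atTop (nhds μ₁) := by
    have h0 : Tendsto (fun n : ℕ => x₀ / n) atTop (nhds 0) :=
      Tendsto.div_atTop tendsto_const_nhds tendsto_natCast_atTop_atTop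
    have := h0.add ha
    simpa [add_div] using this
  have hy : Tendsto (fun n : ℕ => (y₀ + b n) / n) atTop (nhds μ₂) := by
    have h0 : Tendsto (fun n : ℕ => y₀ / n) atTop (nhds 0) :=
      Tendsto.div_atTop tendsto_const_nhds tendsto_natCast_atTop_atTop
    have := h0.add hb
    simpa [add_div] using this
  have h1 : ∀ᶠ n : ℕ in atTop, (x₀ + a n) / n ≥ μ₁ / 2 :=
    hx.eventually (eventually_ge_nhds (by linarith))
  have h2 : ∀ᶠ n : ℕ in atTop, (y₀ + b n) / n ≤ μ₂ + 1 :=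
    hy.eventually (eventually_le_nhds (by linarith))
  have h3 : ∀ᶠ n : ℕ in atTop, (4 * (μ₂ + 1) / μ₁ ^ 2) ≤ (n : ℝ) :=
    tendsto_natCast_atTop_atTop.eventually_ge_atTop _
  have h4 : ∀ᶠ n : ℕ in atTop, (1 : ℝ) ≤ (n : ℝ) :=
    tendsto_natCast_atTop_atTop.eventually_ge_atTop _
  obtain ⟨n, ⟨⟨hn1, hn2⟩, hn3⟩, hn4⟩ := (((h1.and h2).and h3).and h4).exists
  set N := (n : ℝ)
  have hN : 0 < N := by linarith
  have hfa : μ₁ / 2 * N ≤ x₀ + a n := by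
    rw [ge_iff_le, le_div_iff₀ hN] at hn1; linarith
  have hgb : y₀ + b n ≤ (μ₂ + 1) * N := by
    rw [div_le_iff₀ hN] at hn2; linarith
  have hkey : 4 * (μ₂ + 1) ≤ μ₁ ^ 2 * N := by
    rw [div_le_iff₀ (by positivity : (0:ℝ) < μ₁ ^ 2)] at hn3; linarith
  refine ⟨n, ?_⟩
  nlinarith [sq_nonneg (x₀ + a n - μ₁ / 2 * N), sq_nonneg N, mul_pos hμ₁ hN]

/-- **Almost-sure termination of `while y > x² do x := x + r₁; y := y + r₂ od`.**
The pairs `(R_n, S_n)` are i.i.d., with `R_n` independent of `S_n`, positive means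
and finite positive variances. The two-dimensional walk
`(X_n, Y_n) = (x₀ + Σ_{k<n} R_k, y₀ + Σ_{k<n} S_k)` leaves the region above the
parabola `y = x²` almost surely; since the loop stops at the first such time, this
is exactly almost-sure termination from every initial valuation. -/
theorem parabola_walk_termination
    {Ω : Type*} {m0 : MeasurableSpace Ω} (μ : Measure Ω) [IsProbabilityMeasure μ]
    (R S : ℕ → Ω → ℤ) (hRmeas : ∀ n, Measurable (R n)) (hSmeas : ∀ n, Measurable (S n))
    (hpairindep : iIndepFun (fun n ω => (R n ω, S n ω)) μ)
    (hident : ∀ n, IdentDistrib (fun ω => (R n ω, S n ω)) (fun ω => (R 0 ω, S 0 ω)) μ μ)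
    (hRS : ∀ n, IndepFun (R n) (S n) μ)
    (hμ₁ : 0 < ∫ ω, (R 0 ω : ℝ) ∂μ) (hμ₂ : 0 < ∫ ω, (S 0 ω : ℝ) ∂μ)
    (hR2 : MemLp (fun ω => (R 0 ω : ℝ)) 2 μ)
    (hS2 : MemLp (fun ω => (S 0 ω : ℝ)) 2 μ)
    (hvarR : 0 < variance (fun ω => (R 0 ω : ℝ)) μ)
    (hvarS : 0 < variance (fun ω => (S 0 ω : ℝ)) μ) :
    ∀ x₀ y₀ : ℤ,
      μ {ω | ∃ n : ℕ,
        y₀ + ∑ k ∈ Finset.range n, S k ω ≤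
          (x₀ + ∑ k ∈ Finset.range n, R k ω) ^ 2} = 1 := by
  intro x₀ y₀
  -- real-valued versions
  set Rr : ℕ → Ω → ℝ := fun n ω => (R n ω : ℝ) with hRr
  set Sr : ℕ → Ω → ℝ := fun n ω => (S n ω : ℝ) with hSr
  have hcastmeas : Measurable (fun z : ℤ => (z : ℝ)) := measurable_from_top
  have hfst : Measurable (fun p : ℤ × ℤ => p.1) := measurable_fst
  have hsnd : Measurable (fun p : ℤ × ℤ => p.2) := measurable_snd
  have hRindep : Pairwise (Function.onFun (IndepFun · · μ) Rr) := by
    intro i j hij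
    exact ((hpairindep.indepFun hij).comp hfst hfst).comp hcastmeas hcastmeas
  have hSindep : Pairwise (Function.onFun (IndepFun · · μ) Sr) := by
    intro i j hij
    exact ((hpairindep.indepFun hij).comp hsnd hsnd).comp hcastmeas hcastmeas
  have hRident : ∀ i, IdentDistrib (Rr i) (Rr 0) μ μ := fun i =>
    ((hident i).comp hfst).comp hcastmeas
  have hSident : ∀ i, IdentDistrib (Sr i) (Sr 0) μ μ := fun i =>
    ((hident i).comp hsnd).comp hcastmeas
  have hRint : Integrable (Rr 0) μ := hR2.integrable (by norm_num)
  have hSint : Integrable (Sr 0) μ := hS2.integrable (by norm_num)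
  have hslR := strong_law_ae_real Rr hRint hRindep hRident
  have hslS := strong_law_ae_real Sr hSint hSindep hSident
  have hae : ∀ᵐ ω ∂μ, ω ∈ {ω | ∃ n : ℕ,
      y₀ + ∑ k ∈ Finset.range n, S k ω ≤
        (x₀ + ∑ k ∈ Finset.range n, R k ω) ^ 2} := by
    filter_upwards [hslR, hslS] with ω hR' hS'
    have ha : Tendsto (fun n : ℕ => ((∑ k ∈ Finset.range n, R k ω : ℤ) : ℝ) / n)
        atTop (nhds (∫ ω, (R 0 ω : ℝ) ∂μ)) := by
      convert hR' using 2 with n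
      push_cast; ring
    have hb : Tendsto (fun n : ℕ => ((∑ k ∈ Finset.range n, S k ω : ℤ) : ℝ) / n)
        atTop (nhds (∫ ω, (S 0 ω : ℝ) ∂μ)) := by
      convert hS' using 2 with n
      push_cast; ring
    obtain ⟨n, hn⟩ := det_aux _ _ (x₀ : ℝ) (y₀ : ℝ) _ _ hμ₁ ha hb
    exact ⟨n, by exact_mod_cast hn⟩
  have hmeas : MeasurableSet {ω | ∃ n : ℕ,
      y₀ + ∑ k ∈ Finset.range n, S k ω ≤
        (x₀ + ∑ k ∈ Finset.range n, R k ω) ^ 2} := by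
    have : {ω | ∃ n : ℕ,
        y₀ + ∑ k ∈ Finset.range n, S k ω ≤
          (x₀ + ∑ k ∈ Finset.range n, R k ω) ^ 2}
        = ⋃ n : ℕ, {ω | y₀ + ∑ k ∈ Finset.range n, S k ω ≤
          (x₀ + ∑ k ∈ Finset.range n, R k ω) ^ 2} := by
      ext ω; simp
    rw [this]
    refine MeasurableSet.iUnion fun n => ?_
    have h1 : Measurable (fun ω => y₀ + ∑ k ∈ Finset.range n, S k ω) :=
      measurable_const.add (Finset.measurable_sum _ fun k _ => hSmeas k)
    have h2 : Measurable (fun ω => (x₀ + ∑ k ∈ Finset.range n, R k ω) ^ 2) :=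
      (measurable_const.add (Finset.measurable_sum _ fun k _ => hRmeas k)).pow_const 2
    exact measurableSet_le h1 h2
  rw [← prob_compl_eq_zero_iff hmeas]
  rw [ae_iff] at hae
  convert hae using 2
  rfl
end
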